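/- Let n ≥ 3 be an integer. The independence number of the permutability graph of subgroups Γ(D_n) of the dihedral group D_n equals n if n is odd, and equals n/2 if n is even. -/

import Mathlib

open scoped Pointwise

/-- The permutability graph of non-normal subgroups `Γ_N(G)`: vertices are the
non-normal (hence proper) subgroups of `G`, and two distinct vertices are adjacent
iff the corresponding subgroups permute, i.e. `HK = KH` as subsets of `G`. -/
def permGraphN (G : Type*) [Group G] :
    SimpleGraph {H : Subgroup G // ¬ H.Normal} where
  Adj H K := H ≠ K ∧ (H.1 : Set G) * (K.1 : Set G) = (K.1 : Set G) * (H.1 : Set G)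
  symm := ⟨fun _ _ ⟨hne, h⟩ => ⟨hne.symm, h.symm⟩⟩
  loopless := ⟨fun _ ⟨hne, _⟩ => hne rfl⟩

/-- The permutability graph of subgroups `Γ(G)`: vertices are the proper nontrivial
subgroups of `G`, and two distinct vertices are adjacent iff the corresponding
subgroups permute, i.e. `HK = KH` as subsets of `G`. -/
def permGraph (G : Type*) [Group G] :
    SimpleGraph {H : Subgroup G // H ≠ ⊥ ∧ H ≠ ⊤} where
  Adj H K := H ≠ K ∧ (H.1 : Set G) * (K.1 : Set G) = (K.1 : Set G) * (H.1 : Set G)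
  symm := ⟨fun _ _ ⟨hne, h⟩ => ⟨hne.symm, h.symm⟩⟩
  loopless := ⟨fun _ ⟨hne, _⟩ => hne rfl⟩

/-- A set of vertices is independent if no two of its members are adjacent. -/
def IsIndepSet {V : Type*} (G : SimpleGraph V) (s : Set V) : Prop :=
  s.Pairwise fun u v => ¬ G.Adj u v

/-- The independence number of a graph: the largest cardinality of an
independent set of vertices. -/
noncomputable def indepNum {V : Type*} (G : SimpleGraph V) : ℕ :=
  sSup {k | ∃ s : Set V, IsIndepSet G s ∧ s.ncard = k}

namespace Stmt14Aux

open DihedralGroup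

variable {n : ℕ}

lemma mul_subset_of_refl (H K : Subgroup (DihedralGroup n)) {w v : ZMod n}
    (hw : sr w ∈ H) (hv : sr v ∈ K) (h2 : w + w = v + v) :
    (H : Set (DihedralGroup n)) * K ⊆ (K : Set (DihedralGroup n)) * H := by
  rintro x ⟨h, hh, k, hk, rfl⟩
  rcases h with a | a <;> rcases k with b | b
  · exact ⟨r b, hk, r a, hh, by simp [add_comm]⟩
  · exact ⟨sr b, hk, r (-a),
      (show ((r a)⁻¹ : DihedralGroup n) = r (-a) from rfl) ▸ H.inv_mem hh, by simp; try ring_nf⟩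
  · exact ⟨r (-b),
      (show ((r b)⁻¹ : DihedralGroup n) = r (-b) from rfl) ▸ K.inv_mem hk, sr a, hh,
      by simp; try ring_nf⟩
  · refine ⟨sr v * (sr b * sr v), K.mul_mem hv (K.mul_mem hk hv),
      sr w * (sr a * sr w), H.mul_mem hw (H.mul_mem hh hw), ?_⟩
    simp only [sr_mul_sr, sr_mul_r, r_mul_sr]
    congr 1
    linear_combination h2

lemma perm_of_refl (H K : Subgroup (DihedralGroup n)) {w v : ZMod n}
    (hw : sr w ∈ H) (hv : sr v ∈ K) (h2 : w + w = v + v) :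
    (H : Set (DihedralGroup n)) * K = (K : Set (DihedralGroup n)) * H :=
  Set.Subset.antisymm (mul_subset_of_refl H K hw hv h2)
    (mul_subset_of_refl K H hv hw h2.symm)

lemma perm_of_noRefl (H K : Subgroup (DihedralGroup n))
    (hH : ∀ x, sr x ∉ H) :
    (H : Set (DihedralGroup n)) * K = (K : Set (DihedralGroup n)) * H := by
  apply Set.Subset.antisymm
  · rintro x ⟨h, hh, k, hk, rfl⟩
    rcases h with a | a
    · rcases k with b | b
      · exact ⟨r b, hk, r a, hh, by simp [add_comm]⟩
      · exact ⟨sr b, hk, r (-a),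
          (show ((r a)⁻¹ : DihedralGroup n) = r (-a) from rfl) ▸ H.inv_mem hh,
          by simp; try ring_nf⟩
    · exact absurd hh (hH a)
  · rintro x ⟨k, hk, h, hh, rfl⟩
    rcases h with a | a
    · rcases k with b | b
      · exact ⟨r a, hh, r b, hk, by simp [add_comm]⟩
      · exact ⟨r (-a),
          (show ((r a)⁻¹ : DihedralGroup n) = r (-a) from rfl) ▸ H.inv_mem hh, sr b, hk,
          by simp; try ring_nf⟩
    · exact absurd hh (hH a)

/-- The order-2 subgroup generated by the reflection `sr i`. -/
def srsub (n : ℕ) (i : ZMod n) : Subgroup (DihedralGroup n) where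
  carrier := {1, sr i}
  one_mem' := Or.inl rfl
  mul_mem' := by
    rintro a b (rfl | rfl) (rfl | rfl) <;> simp
  inv_mem' := by
    rintro a (rfl | rfl)
    · exact Or.inl inv_one
    · exact Or.inr rfl

lemma sr_mem_srsub (i : ZMod n) : sr i ∈ srsub n i := Or.inr rfl

lemma srsub_ne_bot (i : ZMod n) : srsub n i ≠ ⊥ := by
  intro h
  have : sr i ∈ (⊥ : Subgroup (DihedralGroup n)) := h ▸ sr_mem_srsub i
  rw [Subgroup.mem_bot, one_def] at this
  exact absurd this (fun h => by cases h)

lemma srsub_ne_top (hn : 2 ≤ n) (i : ZMod n) : srsub n i ≠ ⊤ := by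
  haveI : Fact (1 < n) := ⟨hn⟩
  intro h
  have : r 1 ∈ srsub n i := h ▸ Subgroup.mem_top _
  rcases this with h1 | h1
  · rw [one_def] at h1
    have h2 : (1 : ZMod n) = 0 := by injection h1
    exact one_ne_zero h2
  · simp at h1

lemma srsub_inj {i j : ZMod n} (h : srsub n i = srsub n j) : i = j := by
  have : sr i ∈ srsub n j := h ▸ sr_mem_srsub i
  rcases this with h1 | h1
  · rw [one_def] at h1; cases h1
  · injection h1

lemma srsub_not_perm {i j : ZMod n} (hij : i ≠ j) (h2 : i - j ≠ j - i) :
    ((srsub n i : Set (DihedralGroup n)) * (srsub n j : Set (DihedralGroup n))) ≠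
      (srsub n j : Set (DihedralGroup n)) * (srsub n i : Set (DihedralGroup n)) := by
  intro h
  have hmem : r (j - i) ∈
      (srsub n i : Set (DihedralGroup n)) * (srsub n j : Set (DihedralGroup n)) :=
    ⟨sr i, sr_mem_srsub i, sr j, sr_mem_srsub j, by simp⟩
  rw [h] at hmem
  obtain ⟨k, hk, h', hh', heq⟩ := hmem
  simp only at heq
  rcases hk with rfl | rfl <;> rcases hh' with rfl | rfl
  · rw [mul_one, one_def] at heq
    have : (0 : ZMod n) = j - i := by injection heq
    exact hij (by linear_combination this)
  · rw [one_mul] at heq; simp at heq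
  · rw [mul_one] at heq; simp at heq
  · rw [sr_mul_sr] at heq
    have : i - j = j - i := by injection heq
    exact h2 this

lemma disjoint_count {α ι : Type*} [Fintype α] [DecidableEq α] [DecidableEq ι]
    (S : Finset ι) (F : ι → Finset α) (m : ℕ)
    (hd : ∀ x ∈ S, ∀ y ∈ S, x ≠ y → Disjoint (F x) (F y))
    (hc : ∀ i ∈ S, m ≤ (F i).card) :
    S.card * m ≤ Fintype.card α := by
  calc S.card * m = ∑ _i ∈ S, m := by simp [mul_comm]
    _ ≤ ∑ i ∈ S, (F i).card := Finset.sum_le_sum hc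
    _ = (S.biUnion F).card := (Finset.card_biUnion hd).symm
    _ ≤ Fintype.card α := Finset.card_le_univ _

lemma indep_ncard_le (hn : 3 ≤ n) {m : ℕ} (hm : 0 < m)
    (ψ : Subgroup (DihedralGroup n) → Set (ZMod n))
    (hdisj : ∀ H K : Subgroup (DihedralGroup n),
      (H : Set (DihedralGroup n)) * K ≠ (K : Set (DihedralGroup n)) * H →
      ∀ x, x ∈ ψ H → x ∉ ψ K)
    (hcard : ∀ H : Subgroup (DihedralGroup n), (∃ w, sr w ∈ H) → m ≤ (ψ H).ncard)
    (hb : 2 ≤ n / m)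
    (s : Set {H : Subgroup (DihedralGroup n) // H ≠ ⊥ ∧ H ≠ ⊤})
    (hs : IsIndepSet (permGraph (DihedralGroup n)) s) :
    s.ncard ≤ n / m := by
  classical
  haveI : NeZero n := ⟨by omega⟩
  by_cases hsub : s.Subsingleton
  · rcases hsub.eq_empty_or_singleton with rfl | ⟨a, rfl⟩
    · simp
    · rw [Set.ncard_singleton]; omega
  · rw [Set.not_subsingleton_iff] at hsub
    obtain ⟨A, hA, B, hB, hAB⟩ := hsub
    have hrefl : ∀ H ∈ s, ∃ w : ZMod n, sr w ∈ H.1 := by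
      intro H hH
      obtain ⟨C, hC, hHC⟩ : ∃ C ∈ s, H ≠ C := by
        by_cases h : H = A
        · exact ⟨B, hB, by rw [h]; exact hAB⟩
        · exact ⟨A, hA, h⟩
      have hnadj := hs hH hC hHC
      by_contra hno
      push_neg at hno
      exact hnadj (show H ≠ C ∧ _ from ⟨hHC, perm_of_noRefl H.1 C.1 hno⟩)
    have hnp : ∀ H ∈ s, ∀ K ∈ s, H ≠ K →
        (H.1 : Set (DihedralGroup n)) * K.1 ≠ (K.1 : Set (DihedralGroup n)) * H.1 := by
      intro H hH K hK hne hperm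
      exact hs hH hK hne (show H ≠ K ∧ _ from ⟨hne, hperm⟩)
    have hsf : s.Finite := Set.toFinite s
    set S : Finset {H : Subgroup (DihedralGroup n) // H ≠ ⊥ ∧ H ≠ ⊤} := hsf.toFinset with hS
    have hcardS : s.ncard = S.card := Set.ncard_eq_toFinset_card s hsf
    set F : {H : Subgroup (DihedralGroup n) // H ≠ ⊥ ∧ H ≠ ⊤} → Finset (ZMod n) :=
      fun H => (Set.toFinite (ψ H.1)).toFinset with hF
    have hmain : S.card * m ≤ Fintype.card (ZMod n) := by
      apply disjoint_count S F m
      · intro x hx y hy hxy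
        rw [Finset.disjoint_left]
        intro a ha hay
        rw [hF, Set.Finite.mem_toFinset] at ha hay
        rw [hS, Set.Finite.mem_toFinset] at hx hy
        exact hdisj x.1 y.1 (hnp x hx y hy hxy) a ha hay
      · intro H hH
        rw [hS, Set.Finite.mem_toFinset] at hH
        have := hcard H.1 (hrefl H hH)
        rwa [Set.ncard_eq_toFinset_card _ (Set.toFinite (ψ H.1))] at this
    rw [ZMod.card] at hmain
    rw [hcardS, Nat.le_div_iff_mul_le hm]
    exact hmain

lemma exists_indep (hn : 3 ≤ n) {m : ℕ} (hm : m ≤ n)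
    (hkey : ∀ i j : ℕ, i < m → j < m → i ≠ j →
      ((i : ZMod n) - (j : ZMod n) ≠ (j : ZMod n) - (i : ZMod n))) :
    ∃ s : Set {H : Subgroup (DihedralGroup n) // H ≠ ⊥ ∧ H ≠ ⊤},
      IsIndepSet (permGraph (DihedralGroup n)) s ∧ s.ncard = m := by
  haveI : NeZero n := ⟨by omega⟩
  set u : ℕ → {H : Subgroup (DihedralGroup n) // H ≠ ⊥ ∧ H ≠ ⊤} :=
    fun i => ⟨srsub n (i : ZMod n), srsub_ne_bot _, srsub_ne_top (by omega) _⟩ with hu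
  have hcast : ∀ i j : ℕ, i < m → j < m → (i : ZMod n) = (j : ZMod n) → i = j := by
    intro i j hi hj h
    rw [ZMod.natCast_eq_natCast_iff'] at h
    rwa [Nat.mod_eq_of_lt (by omega), Nat.mod_eq_of_lt (by omega)] at h
  have hinj : Set.InjOn u ((Finset.range m : Finset ℕ) : Set ℕ) := by
    intro i hi j hj h
    simp only [Finset.coe_range, Set.mem_Iio] at hi hj
    have : srsub n (i : ZMod n) = srsub n (j : ZMod n) := congrArg Subtype.val h
    exact hcast i j hi hj (srsub_inj this)
  refine ⟨u '' ((Finset.range m : Finset ℕ) : Set ℕ), ?_, ?_⟩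
  · rintro a ⟨i, hi, rfl⟩ b ⟨j, hj, rfl⟩ hab hadj
    simp only [Finset.coe_range, Set.mem_Iio] at hi hj
    have hijn : i ≠ j := fun h => hab (by rw [h])
    have hij : (i : ZMod n) ≠ (j : ZMod n) := fun h => hijn (hcast i j hi hj h)
    exact srsub_not_perm hij (hkey i j hi hj hijn) (show u i ≠ u j ∧ _ from hadj).2
  · rw [Set.ncard_image_of_injOn hinj, Set.ncard_coe_finset, Finset.card_range]

end Stmt14Aux

/-- the independence number of `Γ(D_n)` is `n` for odd `n` and
`n/2` for even `n`. -/
theorem stmt_14 (n : ℕ) (hn : 3 ≤ n) :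
    indepNum (permGraph (DihedralGroup n)) = if Odd n then n else n / 2 := by
  classical
  open DihedralGroup Stmt14Aux in
  haveI : NeZero n := ⟨by omega⟩
  set Kset : Set ℕ :=
    {k | ∃ s : Set {H : Subgroup (DihedralGroup n) // H ≠ ⊥ ∧ H ≠ ⊤},
      IsIndepSet (permGraph (DihedralGroup n)) s ∧ s.ncard = k} with hKset
  by_cases hodd : Odd n
  · -- odd case
    have hub : ∀ k ∈ Kset, k ≤ n := by
      rintro k ⟨s, hs, rfl⟩
      have := indep_ncard_le hn (m := 1) one_pos (fun H => {x | sr x ∈ H})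
        (fun H K hne x hxH hxK => hne (perm_of_refl H K hxH hxK rfl))
        (fun H ⟨w, hw⟩ => (Set.ncard_pos (Set.toFinite _)).mpr ⟨w, hw⟩)
        (by omega) s hs
      simpa using this
    have hmem : n ∈ Kset := by
      apply exists_indep hn le_rfl
      intro i j hi hj hij h
      have h2 : ((2 * i : ℕ) : ZMod n) = ((2 * j : ℕ) : ZMod n) := by
        push_cast
        linear_combination h
      rw [ZMod.natCast_eq_natCast_iff] at h2
      have hco : Nat.gcd n 2 = 1 := Nat.coprime_two_right.mpr hodd
      have h3 := Nat.ModEq.cancel_left_of_coprime hco h2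
      rw [Nat.ModEq, Nat.mod_eq_of_lt hi, Nat.mod_eq_of_lt hj] at h3
      exact hij h3
    have hsup : indepNum (permGraph (DihedralGroup n)) = sSup Kset := rfl
    rw [hsup, if_pos hodd]
    exact le_antisymm (csSup_le ⟨n, hmem⟩ hub) (le_csSup ⟨n, fun k hk => hub k hk⟩ hmem)
  · -- even case
    have h2dvd : 2 ∣ n := (Nat.not_odd_iff_even.mp hodd).two_dvd
    set c : ZMod n := ((n / 2 : ℕ) : ZMod n) with hc
    have hcc : c + c = 0 := by
      rw [hc, ← Nat.cast_add]
      have hh : n / 2 + n / 2 = n := by omega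
      rw [hh, ZMod.natCast_self]
    have hc0 : c ≠ 0 := by
      rw [hc, Ne, ZMod.natCast_eq_zero_iff]
      intro hdvd
      have := Nat.le_of_dvd (by omega) hdvd
      omega
    have hub : ∀ k ∈ Kset, k ≤ n / 2 := by
      rintro k ⟨s, hs, rfl⟩
      refine indep_ncard_le hn (m := 2) two_pos
        (fun H => {x | sr x ∈ H ∨ sr (x + c) ∈ H}) ?_ ?_ (by omega) s hs
      · intro H K hne x hxH hxK
        obtain ⟨w, hwH, hwx⟩ : ∃ w, sr w ∈ H ∧ w + w = x + x := by
          rcases hxH with h | h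
          · exact ⟨x, h, rfl⟩
          · exact ⟨x + c, h, by linear_combination hcc⟩
        obtain ⟨v, hvK, hvx⟩ : ∃ v, sr v ∈ K ∧ v + v = x + x := by
          rcases hxK with h | h
          · exact ⟨x, h, rfl⟩
          · exact ⟨x + c, h, by linear_combination hcc⟩
        exact hne (perm_of_refl H K hwH hvK (by rw [hwx, hvx]))
      · rintro H ⟨w, hw⟩
        have hsub2 : ({w, w + c} : Set (ZMod n)) ⊆ {x | sr x ∈ H ∨ sr (x + c) ∈ H} := by
          rintro x (rfl | rfl)
          · exact Or.inl hw
          · refine Or.inr ?_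
            have hh : w + c + c = w := by linear_combination hcc
            rwa [hh]
        have hne2 : w ≠ w + c := fun h => hc0 (by linear_combination -h)
        calc (2 : ℕ) = ({w, w + c} : Set (ZMod n)).ncard := (Set.ncard_pair hne2).symm
          _ ≤ _ := Set.ncard_le_ncard hsub2 (Set.toFinite _)
    have hmem : n / 2 ∈ Kset := by
      apply exists_indep hn (by omega)
      intro i j hi hj hij h
      have h2 : ((2 * i : ℕ) : ZMod n) = ((2 * j : ℕ) : ZMod n) := by
        push_cast
        linear_combination h
      rw [ZMod.natCast_eq_natCast_iff, Nat.ModEq,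
        Nat.mod_eq_of_lt (by omega), Nat.mod_eq_of_lt (by omega)] at h2
      omega
    have hsup : indepNum (permGraph (DihedralGroup n)) = sSup Kset := rfl
    rw [hsup, if_neg hodd]
    exact le_antisymm (csSup_le ⟨n / 2, hmem⟩ hub)
      (le_csSup ⟨n / 2, fun k hk => hub k hk⟩ hmem)
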